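/- Let X, Y, Z, W be subsets of Fin m with |X| ≠ |Y|, |X| < m and |Y| < m, let A = Δ_X^c, B = Δ_Y^c, C = Δ_Z, E = Δ_W, and set c = |Z|+|W|. Then: the number of messages t ∈ (Fin m → 𝔽₂)⁴ with w(t) = 0 equals 2^{2m−c}; the number of t with 2·w(t) = (2^m − 2^{|X|})·2^{m+c} equals (2^{m−|Y|} − 1)·2^{2m−c}; the number of t with 2·w(t) = (2^m − 2^{|Y|})·2^{m+c} equals (2^{m−|X|} − 1)·2^{2m−c}; the number of t with 2·w(t) = (2^m − 2^{|X|} − 2^{|Y|})·2^{m+c} equals (2^{2m−|X|−|Y|} − 2^{m−|X|} − 2^{m−|Y|} + 1)·2^{2m−c}; and the number of t with 2·w(t) = (2^m − 2^{|X|})(2^m − 2^{|Y|})·2^c equals (2^{2m+c} − 2^{2m−|X|−|Y|})·2^{2m−c}. (Hence C_D^{(2)} is a four-weight binary linear code of length (2^m−2^{|X|})(2^m−2^{|Y|})2^c, dimension 2m+c and minimum distance (2^m−2^{|X|}−2^{|Y|})2^{m+c−1}.) -/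

import Mathlib

open Finset

/-- Euclidean dot product of vectors over `𝔽₂`. -/
def dotp {m : ℕ} (x y : Fin m → ZMod 2) : ZMod 2 := ∑ i, x i * y i

/-- Support of a vector over `𝔽₂`. -/
def supp {m : ℕ} (v : Fin m → ZMod 2) : Finset (Fin m) :=
  Finset.univ.filter fun i => v i ≠ 0

/-- The simplicial complex `Δ_S` generated by `S ⊆ [m]`. -/
def delta {m : ℕ} (S : Finset (Fin m)) : Finset (Fin m → ZMod 2) :=
  Finset.univ.filter fun u => supp u ⊆ S

/-- The complement `Δ_S^c` of the simplicial complex generated by `S`. -/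
def deltac {m : ℕ} (S : Finset (Fin m)) : Finset (Fin m → ZMod 2) :=
  Finset.univ \ delta S

/-- A message `(x₁, x₂, x₃, x₄)` consisting of four vectors over `𝔽₂`. -/
abbrev Msg (m : ℕ) :=
  (Fin m → ZMod 2) × (Fin m → ZMod 2) × (Fin m → ZMod 2) × (Fin m → ZMod 2)

/-- The value of the codeword of the subfield code `C_D^{(2)}` associated to the
message `t = (x₁,x₂,x₃,x₄)` at the position `p = (a,b,c,e)`:
`(x₁+x₄)·a + x₃·b + x₂·c + x₁·e`. -/
def cword {m : ℕ} (t p : Msg m) : ZMod 2 :=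
  dotp (t.1 + t.2.2.2) p.1 + dotp t.2.2.1 p.2.1 + dotp t.2.1 p.2.2.1 +
    dotp t.1 p.2.2.2

/-- Hamming weight of the codeword associated to the message `t`, for the code
with defining positions `A × B × C × E`. -/
def cw {m : ℕ} (A B C E : Finset (Fin m → ZMod 2)) (t : Msg m) : ℕ :=
  ((A ×ˢ B ×ˢ C ×ˢ E).filter fun p => cword t p = 1).card

def chi (x : ZMod 2) : ℤ := if x = 0 then 1 else -1

lemma chi_add (x y : ZMod 2) : chi (x + y) = chi x * chi y := by
  fin_cases x <;> fin_cases y <;> simp [chi] <;> decide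

lemma mem_delta {m : ℕ} {S : Finset (Fin m)} {u : Fin m → ZMod 2} :
    u ∈ delta S ↔ ∀ i ∉ S, u i = 0 := by
  simp only [delta, mem_filter, mem_univ, true_and, supp, Finset.subset_iff,
    mem_filter, mem_univ, true_and]
  constructor
  · intro h i hi; by_contra hne; exact hi (h hne)
  · intro h i hi; by_contra hiS; exact hi (h i hiS)

lemma card_delta {m : ℕ} (S : Finset (Fin m)) : (delta S).card = 2 ^ S.card := by
  classical
  have : delta S = Fintype.piFinset (fun i => if i ∈ S then (Finset.univ : Finset (ZMod 2)) else {0}) := by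
    ext u
    simp only [mem_delta, Fintype.mem_piFinset]
    constructor
    · intro h i
      by_cases hi : i ∈ S <;> simp [hi, h]
    · intro h i hi
      have := h i
      simp [hi] at this
      exact this
  rw [this, Fintype.card_piFinset]
  rw [show (fun i => (if i ∈ S then (Finset.univ : Finset (ZMod 2)) else {0}).card) = fun i => if i ∈ S then 2 else 1 by
    funext i; by_cases hi : i ∈ S <;> simp [hi]]
  rw [Finset.prod_ite_mem, Finset.univ_inter, Finset.prod_const]

lemma delta_univ {m : ℕ} : delta (Finset.univ : Finset (Fin m)) = Finset.univ := by
  ext u; simp [mem_delta]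

lemma sum_chi_eq {α : Type*} [DecidableEq α] (A : Finset α) (f : α → ZMod 2) :
    ∑ a ∈ A, chi (f a) = (A.card : ℤ) - 2 * ((A.filter fun a => f a = 1).card : ℤ) := by
  classical
  rw [← Finset.sum_filter_add_sum_filter_not A (fun a => f a = 1)]
  have h1 : ∑ a ∈ A.filter (fun a => f a = 1), chi (f a)
      = -((A.filter fun a => f a = 1).card : ℤ) := by
    rw [Finset.sum_congr rfl (g := fun _ => (-1 : ℤ)) (fun a ha => by
      simp only [Finset.mem_filter] at ha
      simp [chi, ha.2])]
    simp [Finset.sum_const]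
  have h2 : ∑ a ∈ A.filter (fun a => ¬ f a = 1), chi (f a)
      = ((A.filter fun a => ¬ f a = 1).card : ℤ) := by
    rw [Finset.sum_congr rfl (g := fun _ => (1 : ℤ)) (fun a ha => by
      simp only [Finset.mem_filter] at ha
      have : f a = 0 := by
        have := ha.2; revert this; generalize f a = x; revert x; decide
      simp [chi, this])]
    simp
  rw [h1, h2]
  have := Finset.card_filter_add_card_filter_not (s := A) (p := fun a => f a = 1)
  push_cast [← this]
  ring

lemma dotp_add_single {m : ℕ} (u a : Fin m → ZMod 2) (i₀ : Fin m) :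
    dotp u (a + Pi.single i₀ 1) = dotp u a + u i₀ := by
  unfold dotp
  simp only [Pi.add_apply, mul_add, Finset.sum_add_distrib]
  congr 1
  simp [Pi.single_apply, mul_ite]

lemma zmod2_add_self (x : ZMod 2) : x + x = 0 := by revert x; decide

lemma sum_chi_delta {m : ℕ} (S : Finset (Fin m)) (u : Fin m → ZMod 2) :
    ∑ a ∈ delta S, chi (dotp u a) = if (∀ i ∈ S, u i = 0) then (2 ^ S.card : ℤ) else 0 := by
  classical
  split_ifs with h
  · rw [Finset.sum_congr rfl (g := fun _ => (1:ℤ)) (fun a ha => by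
      have hz : dotp u a = 0 := by
        unfold dotp
        apply Finset.sum_eq_zero
        intro i _
        by_cases hi : i ∈ S
        · rw [h i hi, zero_mul]
        · rw [mem_delta] at ha
          rw [ha i hi, mul_zero]
      simp [chi, hz])]
    simp [card_delta]
  · push_neg at h
    obtain ⟨i₀, hi₀S, hi₀⟩ := h
    have hu : u i₀ = 1 := by revert hi₀; generalize u i₀ = x; revert x; decide
    refine Finset.sum_involution (fun a _ => a + Pi.single i₀ 1) (fun a ha => ?_)
      (fun a ha _ => ?_) (fun a ha => ?_) (fun a ha => ?_)
    · rw [dotp_add_single, hu]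
      generalize dotp u a = x
      revert x; decide
    · intro hEq
      have h2 := congrFun hEq i₀
      simp at h2
    · rw [mem_delta] at ha ⊢
      intro i hi
      have hne : i ≠ i₀ := fun h => hi (h ▸ hi₀S)
      simp [Pi.single_eq_of_ne hne, ha i hi]
    · funext i
      simp [add_assoc, zmod2_add_self]

lemma sum_chi_univ {m : ℕ} (u : Fin m → ZMod 2) :
    ∑ a : Fin m → ZMod 2, chi (dotp u a) = if u = 0 then (2 ^ m : ℤ) else 0 := by
  have h := sum_chi_delta (Finset.univ : Finset (Fin m)) u
  rw [delta_univ] at h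
  rw [h]
  congr 1
  · simp [funext_iff]
  · simp

lemma card_univ_vec (m : ℕ) : (Finset.univ : Finset (Fin m → ZMod 2)).card = 2 ^ m := by
  simp [Finset.card_univ]

lemma sum_chi_deltac {m : ℕ} (S : Finset (Fin m)) (u : Fin m → ZMod 2) :
    ∑ a ∈ deltac S, chi (dotp u a)
      = (if u = 0 then (2 ^ m : ℤ) else 0) - (if (∀ i ∈ S, u i = 0) then (2 ^ S.card : ℤ) else 0) := by
  have hsub : delta S ⊆ Finset.univ := Finset.subset_univ _
  have := Finset.sum_sdiff (f := fun a => chi (dotp u a)) hsub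
  rw [deltac, eq_sub_iff_add_eq, ← sum_chi_delta S u, ← sum_chi_univ u]
  exact this

lemma card_deltac {m : ℕ} (S : Finset (Fin m)) : (deltac S).card = 2 ^ m - 2 ^ S.card := by
  rw [deltac, Finset.card_sdiff_of_subset (Finset.subset_univ _), card_delta, card_univ_vec]

lemma S2 {α β : Type*} (A : Finset α) (B : Finset β) (f : α → ZMod 2) (g : β → ZMod 2) :
    ∑ p ∈ A ×ˢ B, chi (f p.1 + g p.2) = (∑ a ∈ A, chi (f a)) * (∑ b ∈ B, chi (g b)) := by
  rw [Finset.sum_product, Finset.sum_mul_sum]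
  simp [chi_add]

lemma S4 {α β γ δ : Type*} (A : Finset α) (B : Finset β) (C : Finset γ) (E : Finset δ)
    (f : α → ZMod 2) (g : β → ZMod 2) (h : γ → ZMod 2) (k : δ → ZMod 2) :
    ∑ p ∈ A ×ˢ B ×ˢ C ×ˢ E, chi (f p.1 + g p.2.1 + h p.2.2.1 + k p.2.2.2)
      = (∑ a ∈ A, chi (f a)) * (∑ b ∈ B, chi (g b)) * (∑ c ∈ C, chi (h c)) * (∑ e ∈ E, chi (k e)) := by
  have step : ∑ p ∈ A ×ˢ B ×ˢ C ×ˢ E, chi (f p.1 + g p.2.1 + h p.2.2.1 + k p.2.2.2)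
      = ∑ p ∈ A ×ˢ B ×ˢ C ×ˢ E, chi (f p.1 + (g p.2.1 + (h p.2.2.1 + k p.2.2.2))) := by
    apply Finset.sum_congr rfl
    intro p _
    rw [add_assoc, add_assoc]
  rw [step]
  simp only [Finset.sum_product, chi_add, ← Finset.mul_sum, ← Finset.sum_mul]
  ring

lemma two_mul_card_filter {α β γ δ : Type*} [DecidableEq α] [DecidableEq β] [DecidableEq γ] [DecidableEq δ]
    (A : Finset α) (B : Finset β) (C : Finset γ) (E : Finset δ)
    (f : α → ZMod 2) (g : β → ZMod 2) (h : γ → ZMod 2) (k : δ → ZMod 2) :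
    2 * (((A ×ˢ B ×ˢ C ×ˢ E).filter fun p => f p.1 + g p.2.1 + h p.2.2.1 + k p.2.2.2 = 1).card : ℤ)
      = (A.card : ℤ) * B.card * C.card * E.card
        - (∑ a ∈ A, chi (f a)) * (∑ b ∈ B, chi (g b)) * (∑ c ∈ C, chi (h c)) * (∑ e ∈ E, chi (k e)) := by
  have := sum_chi_eq (A ×ˢ B ×ˢ C ×ˢ E) (fun p => f p.1 + g p.2.1 + h p.2.2.1 + k p.2.2.2)
  rw [S4] at this
  simp only [Finset.card_product] at this
  push_cast at this
  linarith

def sZv {m : ℕ} (S : Finset (Fin m)) (u : Fin m → ZMod 2) : ℤ :=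
  if ∀ i ∈ S, u i = 0 then 2 ^ S.card else 0

def sAv {m : ℕ} (S : Finset (Fin m)) (u : Fin m → ZMod 2) : ℤ :=
  (if u = 0 then (2 : ℤ) ^ m else 0) - sZv S u

lemma card_le_m {m : ℕ} (S : Finset (Fin m)) : S.card ≤ m := by
  simpa using Finset.card_le_univ S

lemma two_cw {m : ℕ} (X Y Z W : Finset (Fin m)) (t : Msg m) :
    (2 * cw (deltac X) (deltac Y) (delta Z) (delta W) t : ℤ)
      = ((2 ^ m : ℤ) - 2 ^ X.card) * ((2 ^ m : ℤ) - 2 ^ Y.card) * (2 ^ Z.card * 2 ^ W.card)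
        - sAv X (t.1 + t.2.2.2) * sAv Y t.2.2.1 * sZv Z t.2.1 * sZv W t.1 := by
  classical
  have h := two_mul_card_filter (deltac X) (deltac Y) (delta Z) (delta W)
      (dotp (t.1 + t.2.2.2)) (dotp t.2.2.1) (dotp t.2.1) (dotp t.1)
  have hc : (cw (deltac X) (deltac Y) (delta Z) (delta W) t : ℤ)
      = (((deltac X ×ˢ deltac Y ×ˢ delta Z ×ˢ delta W).filter fun p =>
          dotp (t.1 + t.2.2.2) p.1 + dotp t.2.2.1 p.2.1 + dotp t.2.1 p.2.2.1
            + dotp t.1 p.2.2.2 = 1).card : ℤ) := rfl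
  push_cast
  rw [hc, h, sum_chi_deltac, sum_chi_deltac, sum_chi_delta, sum_chi_delta,
    card_deltac, card_deltac, card_delta, card_delta]
  have hx : (2:ℕ) ^ X.card ≤ 2 ^ m := Nat.pow_le_pow_right (by norm_num) (card_le_m X)
  have hy : (2:ℕ) ^ Y.card ≤ 2 ^ m := Nat.pow_le_pow_right (by norm_num) (card_le_m Y)
  rw [Nat.cast_sub hx, Nat.cast_sub hy]
  push_cast
  rw [sAv, sAv, sZv, sZv, sZv, sZv]
  ring

lemma pi_add_self {m : ℕ} (a : Fin m → ZMod 2) : a + a = 0 :=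
  funext fun i => zmod2_add_self (a i)

lemma card_filter_msg {m : ℕ} (P : Msg m → Prop) [DecidablePred P] :
    (Finset.univ.filter fun t : Msg m => P (t.1 + t.2.2.2, t.2.2.1, t.2.1, t.1)).card
      = (Finset.univ.filter P).card := by
  classical
  have hRI : ∀ u : Msg m,
      ((u.2.2.2 + (u.1 + u.2.2.2), u.2.1, u.2.2.1, u.2.2.2) : Msg m) = u := by
    intro u
    have h1 : u.2.2.2 + (u.1 + u.2.2.2) = u.1 := by
      rw [add_comm u.1, ← add_assoc, pi_add_self, zero_add]
    rw [h1]
  have hLI : ∀ t : Msg m,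
      ((t.1, t.2.1, t.2.2.1, t.1 + t.2.2.2 + t.1) : Msg m) = t := by
    intro t
    have h1 : t.1 + t.2.2.2 + t.1 = t.2.2.2 := by
      rw [add_comm t.1 t.2.2.2, add_assoc, pi_add_self, add_zero]
    rw [h1]
  apply Finset.card_nbij'
    (i := fun t : Msg m => ((t.1 + t.2.2.2, t.2.2.1, t.2.1, t.1) : Msg m))
    (j := fun u : Msg m => ((u.2.2.2, u.2.2.1, u.2.1, u.1 + u.2.2.2) : Msg m))
  · intro t ht
    simp only [Finset.mem_coe, Finset.mem_filter, Finset.mem_univ, true_and] at ht ⊢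
    exact ht
  · intro u hu
    simp only [Finset.mem_coe, Finset.mem_filter, Finset.mem_univ, true_and] at hu ⊢
    show P _
    rw [hRI u]
    exact hu
  · intro t _
    exact hLI t
  · intro u _
    exact hRI u

lemma card_filter_prod4 {m : ℕ} (p q r s : (Fin m → ZMod 2) → Prop)
    [DecidablePred p] [DecidablePred q] [DecidablePred r] [DecidablePred s] :
    (Finset.univ.filter fun u : Msg m => p u.1 ∧ q u.2.1 ∧ r u.2.2.1 ∧ s u.2.2.2).card
      = (Finset.univ.filter p).card * (Finset.univ.filter q).card *
          (Finset.univ.filter r).card * (Finset.univ.filter s).card := by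
  classical
  have h : (Finset.univ.filter fun u : Msg m => p u.1 ∧ q u.2.1 ∧ r u.2.2.1 ∧ s u.2.2.2)
      = (Finset.univ.filter p) ×ˢ (Finset.univ.filter q) ×ˢ
          (Finset.univ.filter r) ×ˢ (Finset.univ.filter s) := by
    ext u
    simp only [Finset.mem_filter, Finset.mem_univ, true_and, Finset.mem_product]
    try tauto
  rw [h]
  simp [Finset.card_product, mul_assoc]


lemma count_eq_zero {m : ℕ} :
    (Finset.univ.filter fun u : Fin m → ZMod 2 => u = 0).card = 1 := by
  simp [Finset.filter_eq']

lemma count_vanish {m : ℕ} (S : Finset (Fin m)) :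
    (Finset.univ.filter fun u : Fin m → ZMod 2 => ∀ i ∈ S, u i = 0).card = 2 ^ (m - S.card) := by
  classical
  have : (Finset.univ.filter fun u : Fin m → ZMod 2 => ∀ i ∈ S, u i = 0) = delta Sᶜ := by
    ext u
    simp only [Finset.mem_filter, Finset.mem_univ, true_and, mem_delta, Finset.mem_compl]
    constructor
    · intro h i hi
      simp only [not_not] at hi
      exact h i hi
    · intro h i hi
      exact h i (by simp [hi])
  rw [this, card_delta, Finset.card_compl]
  simp

lemma count_vanish_ne {m : ℕ} (S : Finset (Fin m)) :
    (Finset.univ.filter fun u : Fin m → ZMod 2 => ¬u = 0 ∧ ∀ i ∈ S, u i = 0).card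
      = 2 ^ (m - S.card) - 1 := by
  classical
  have h1 : (Finset.univ.filter fun u : Fin m → ZMod 2 => ¬u = 0 ∧ ∀ i ∈ S, u i = 0)
      = (Finset.univ.filter fun u : Fin m → ZMod 2 => ∀ i ∈ S, u i = 0).erase 0 := by
    ext u
    simp only [Finset.mem_filter, Finset.mem_univ, true_and, Finset.mem_erase]
    try tauto
  rw [h1, Finset.card_erase_of_mem (by simp), count_vanish]

lemma count_true {m : ℕ} :
    (Finset.univ.filter fun _ : Fin m → ZMod 2 => True).card = 2 ^ m := by
  simp [card_univ_vec]

lemma classify {m : ℕ} (X Y Z W : Finset (Fin m)) (u1 u2 u3 u4 : Fin m → ZMod 2) :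
    ((u1 = 0 ∧ u2 = 0 ∧ (∀ i ∈ Z, u3 i = 0) ∧ (∀ i ∈ W, u4 i = 0)) ∧
        sAv X u1 * sAv Y u2 * sZv Z u3 * sZv W u4
          = ((2:ℤ)^m - 2^X.card) * ((2:ℤ)^m - 2^Y.card) * (2^Z.card * 2^W.card)) ∨
    ((u1 = 0 ∧ (¬u2 = 0 ∧ ∀ i ∈ Y, u2 i = 0) ∧ (∀ i ∈ Z, u3 i = 0) ∧ (∀ i ∈ W, u4 i = 0)) ∧
        sAv X u1 * sAv Y u2 * sZv Z u3 * sZv W u4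
          = -(((2:ℤ)^m - 2^X.card) * 2^Y.card * (2^Z.card * 2^W.card))) ∨
    (((¬u1 = 0 ∧ ∀ i ∈ X, u1 i = 0) ∧ u2 = 0 ∧ (∀ i ∈ Z, u3 i = 0) ∧ (∀ i ∈ W, u4 i = 0)) ∧
        sAv X u1 * sAv Y u2 * sZv Z u3 * sZv W u4
          = -(((2:ℤ)^m - 2^Y.card) * 2^X.card * (2^Z.card * 2^W.card))) ∨
    (((¬u1 = 0 ∧ ∀ i ∈ X, u1 i = 0) ∧ (¬u2 = 0 ∧ ∀ i ∈ Y, u2 i = 0) ∧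
        (∀ i ∈ Z, u3 i = 0) ∧ (∀ i ∈ W, u4 i = 0)) ∧
        sAv X u1 * sAv Y u2 * sZv Z u3 * sZv W u4
          = (2:ℤ)^X.card * 2^Y.card * (2^Z.card * 2^W.card)) ∨
    ((¬((∀ i ∈ X, u1 i = 0) ∧ (∀ i ∈ Y, u2 i = 0) ∧ (∀ i ∈ Z, u3 i = 0) ∧ (∀ i ∈ W, u4 i = 0))) ∧
        sAv X u1 * sAv Y u2 * sZv Z u3 * sZv W u4 = 0) := by
  classical
  by_cases h3 : ∀ i ∈ Z, u3 i = 0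
  · by_cases h4 : ∀ i ∈ W, u4 i = 0
    · by_cases h1' : ∀ i ∈ X, u1 i = 0
      · by_cases h2' : ∀ i ∈ Y, u2 i = 0
        · have e3 : sZv Z u3 = 2 ^ Z.card := if_pos h3
          have e4 : sZv W u4 = 2 ^ W.card := if_pos h4
          by_cases h1 : u1 = 0
          · have e1 : sAv X u1 = (2:ℤ)^m - 2^X.card := by
              rw [sAv, sZv, if_pos h1, if_pos h1']
            by_cases h2 : u2 = 0
            · have e2 : sAv Y u2 = (2:ℤ)^m - 2^Y.card := by
                rw [sAv, sZv, if_pos h2, if_pos h2']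
              exact Or.inl ⟨⟨h1, h2, h3, h4⟩, by rw [e1, e2, e3, e4]; ring⟩
            · have e2 : sAv Y u2 = -(2:ℤ)^Y.card := by
                rw [sAv, sZv, if_neg h2, if_pos h2']; ring
              exact Or.inr (Or.inl ⟨⟨h1, ⟨h2, h2'⟩, h3, h4⟩, by rw [e1, e2, e3, e4]; ring⟩)
          · have e1 : sAv X u1 = -(2:ℤ)^X.card := by
              rw [sAv, sZv, if_neg h1, if_pos h1']; ring
            by_cases h2 : u2 = 0
            · have e2 : sAv Y u2 = (2:ℤ)^m - 2^Y.card := by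
                rw [sAv, sZv, if_pos h2, if_pos h2']
              exact Or.inr (Or.inr (Or.inl ⟨⟨⟨h1, h1'⟩, h2, h3, h4⟩, by rw [e1, e2, e3, e4]; ring⟩))
            · have e2 : sAv Y u2 = -(2:ℤ)^Y.card := by
                rw [sAv, sZv, if_neg h2, if_pos h2']; ring
              exact Or.inr (Or.inr (Or.inr (Or.inl
                ⟨⟨⟨h1, h1'⟩, ⟨h2, h2'⟩, h3, h4⟩, by rw [e1, e2, e3, e4]; ring⟩)))
        · have h2 : ¬u2 = 0 := fun h => h2' (fun i _ => by rw [h]; rfl)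
          have e2 : sAv Y u2 = 0 := by rw [sAv, sZv, if_neg h2, if_neg h2']; ring
          exact Or.inr (Or.inr (Or.inr (Or.inr ⟨fun h => h2' h.2.1, by rw [e2]; ring⟩)))
      · have h1 : ¬u1 = 0 := fun h => h1' (fun i _ => by rw [h]; rfl)
        have e1 : sAv X u1 = 0 := by rw [sAv, sZv, if_neg h1, if_neg h1']; ring
        exact Or.inr (Or.inr (Or.inr (Or.inr ⟨fun h => h1' h.1, by rw [e1]; ring⟩)))
    · have e4 : sZv W u4 = 0 := if_neg h4
      exact Or.inr (Or.inr (Or.inr (Or.inr ⟨fun h => h4 h.2.2.2, by rw [e4]; ring⟩)))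
  · have e3 : sZv Z u3 = 0 := if_neg h3
    exact Or.inr (Or.inr (Or.inr (Or.inr ⟨fun h => h3 h.2.2.1, by rw [e3]; ring⟩)))

lemma count_class {m : ℕ} (Q1 Q2 Q3 Q4 : (Fin m → ZMod 2) → Prop)
    [DecidablePred Q1] [DecidablePred Q2] [DecidablePred Q3] [DecidablePred Q4] :
    (Finset.univ.filter fun t : Msg m =>
        Q1 (t.1 + t.2.2.2) ∧ Q2 t.2.2.1 ∧ Q3 t.2.1 ∧ Q4 t.1).card
      = (Finset.univ.filter Q1).card * (Finset.univ.filter Q2).card *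
          (Finset.univ.filter Q3).card * (Finset.univ.filter Q4).card := by
  classical
  have h1 := card_filter_msg (m := m)
    (P := fun u : Msg m => Q1 u.1 ∧ Q2 u.2.1 ∧ Q3 u.2.2.1 ∧ Q4 u.2.2.2)
  have h2 := card_filter_prod4 Q1 Q2 Q3 Q4
  calc (Finset.univ.filter fun t : Msg m =>
        Q1 (t.1 + t.2.2.2) ∧ Q2 t.2.2.1 ∧ Q3 t.2.1 ∧ Q4 t.1).card
      = (Finset.univ.filter fun u : Msg m =>
          Q1 u.1 ∧ Q2 u.2.1 ∧ Q3 u.2.2.1 ∧ Q4 u.2.2.2).card := by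
        rw [← h1]
    _ = _ := h2

lemma nat_pow_add_lt {a b m : ℕ} (hab : a ≠ b) (ha : a < m) (hb : b < m) :
    2 ^ a + 2 ^ b < 2 ^ m := by
  rcases lt_or_gt_of_ne hab with h | h
  · have h1 : (2:ℕ) ^ a < 2 ^ b := Nat.pow_lt_pow_right one_lt_two h
    have h2 : (2:ℕ) ^ (b + 1) ≤ 2 ^ m := Nat.pow_le_pow_right (by norm_num) (by omega)
    rw [pow_succ] at h2
    omega
  · have h1 : (2:ℕ) ^ b < 2 ^ a := Nat.pow_lt_pow_right one_lt_two h
    have h2 : (2:ℕ) ^ (a + 1) ≤ 2 ^ m := Nat.pow_le_pow_right (by norm_num) (by omega)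
    rw [pow_succ] at h2
    omega

lemma card_univ_msg (m : ℕ) : (Finset.univ : Finset (Msg m)).card = 2 ^ (4 * m) := by
  rw [Finset.card_univ]
  simp only [Fintype.card_prod, Fintype.card_fun, ZMod.card, Fintype.card_fin]
  rw [← pow_add, ← pow_add, ← pow_add]
  congr 1
  ring

lemma sub_one_mul_sub_one {A B : ℕ} (hA : 2 ≤ A) (hB : 2 ≤ B) :
    (A - 1) * (B - 1) = A * B - A - B + 1 := by
  obtain ⟨a, rfl⟩ : ∃ a, A = a + 2 := ⟨A - 2, by omega⟩
  obtain ⟨b, rfl⟩ : ∃ b, B = b + 2 := ⟨B - 2, by omega⟩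
  have e1 : a + 2 - 1 = a + 1 := by omega
  have e2 : b + 2 - 1 = b + 1 := by omega
  have h1 : (a + 1) * (b + 1) = a * b + a + b + 1 := by ring
  have hmul : (a + 2) * (b + 2) = a * b + 2 * a + 2 * b + 4 := by ring
  rw [e1, e2, h1, hmul]
  generalize a * b = k
  omega

lemma nat_eq_iff_int (n Tn : ℕ) (S V0 Tz : ℤ) (hv : 2 * (n:ℤ) = V0 - S) (hT : (Tn:ℤ) = Tz) :
    2 * n = Tn ↔ S = V0 - Tz := by
  constructor
  · intro h
    have h2 : ((2 * n : ℕ) : ℤ) = Tz := by rw [← hT]; exact_mod_cast congrArg (Nat.cast (R := ℤ)) h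
    push_cast at h2
    linarith
  · intro h
    have h2 : ((2 * n : ℕ) : ℤ) = (Tn : ℤ) := by push_cast; rw [hT]; linarith
    exact_mod_cast h2

set_option maxHeartbeats 2000000 in
theorem stmt7 (m : ℕ) (hm : 0 < m) (X Y Z W : Finset (Fin m))
    (hXY : X.card ≠ Y.card) (hXm : X.card < m) (hYm : Y.card < m) :
    ((Finset.univ.filter fun t : Msg m =>
        cw (deltac X) (deltac Y) (delta Z) (delta W) t = 0).card
      = 2 ^ (2 * m - (Z.card + W.card))) ∧
    ((Finset.univ.filter fun t : Msg m =>
        2 * cw (deltac X) (deltac Y) (delta Z) (delta W) t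
          = (2 ^ m - 2 ^ X.card) * 2 ^ (m + (Z.card + W.card))).card
      = (2 ^ (m - Y.card) - 1) * 2 ^ (2 * m - (Z.card + W.card))) ∧
    ((Finset.univ.filter fun t : Msg m =>
        2 * cw (deltac X) (deltac Y) (delta Z) (delta W) t
          = (2 ^ m - 2 ^ Y.card) * 2 ^ (m + (Z.card + W.card))).card
      = (2 ^ (m - X.card) - 1) * 2 ^ (2 * m - (Z.card + W.card))) ∧
    ((Finset.univ.filter fun t : Msg m =>
        2 * cw (deltac X) (deltac Y) (delta Z) (delta W) t
          = (2 ^ m - 2 ^ X.card - 2 ^ Y.card) * 2 ^ (m + (Z.card + W.card))).card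
      = (2 ^ (2 * m - X.card - Y.card) - 2 ^ (m - X.card) - 2 ^ (m - Y.card) + 1) *
          2 ^ (2 * m - (Z.card + W.card))) ∧
    ((Finset.univ.filter fun t : Msg m =>
        2 * cw (deltac X) (deltac Y) (delta Z) (delta W) t
          = (2 ^ m - 2 ^ X.card) * (2 ^ m - 2 ^ Y.card) * 2 ^ (Z.card + W.card)).card
      = (2 ^ (2 * m + (Z.card + W.card)) - 2 ^ (2 * m - X.card - Y.card)) *
          2 ^ (2 * m - (Z.card + W.card))) := by
  classical
  have hZm : Z.card ≤ m := card_le_m Z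
  have hWm : W.card ≤ m := card_le_m W
  have he0 : (m - Z.card) + (m - W.card) = 2 * m - (Z.card + W.card) := by omega
  have he3 : (m - X.card) + (m - Y.card) = 2 * m - X.card - Y.card := by omega
  have h2X : 2 ≤ 2 ^ (m - X.card) := by
    calc 2 = 2 ^ 1 := rfl
    _ ≤ 2 ^ (m - X.card) := Nat.pow_le_pow_right (by norm_num) (by omega)
  have h2Y : 2 ≤ 2 ^ (m - Y.card) := by
    calc 2 = 2 ^ 1 := rfl
    _ ≤ 2 ^ (m - Y.card) := Nat.pow_le_pow_right (by norm_num) (by omega)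
  have he41 : 2 * m + (Z.card + W.card) + (2 * m - (Z.card + W.card)) = 4 * m := by omega
  have he42 : 2 * m - X.card - Y.card + (2 * m - (Z.card + W.card))
      = (m - X.card) + (m - Y.card) + (m - Z.card) + (m - W.card) := by omega
  have hxle : (2:ℕ) ^ X.card ≤ 2 ^ m := Nat.pow_le_pow_right (by norm_num) hXm.le
  have hyle : (2:ℕ) ^ Y.card ≤ 2 ^ m := Nat.pow_le_pow_right (by norm_num) hYm.le
  have hxyle : (2:ℕ) ^ X.card + 2 ^ Y.card < 2 ^ m := nat_pow_add_lt hXY hXm hYm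
  have hMx : (2:ℤ) ^ X.card < 2 ^ m := by exact_mod_cast Nat.pow_lt_pow_right one_lt_two hXm
  have hMy : (2:ℤ) ^ Y.card < 2 ^ m := by exact_mod_cast Nat.pow_lt_pow_right one_lt_two hYm
  have hsum : (2:ℤ) ^ X.card + 2 ^ Y.card < 2 ^ m := by exact_mod_cast hxyle
  have hxy : (2:ℤ) ^ X.card ≠ 2 ^ Y.card := by
    intro h
    exact hXY (Nat.pow_right_injective le_rfl (by exact_mod_cast h))
  have hx0 : (0:ℤ) < 2 ^ X.card := by positivity
  have hy0 : (0:ℤ) < 2 ^ Y.card := by positivity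
  have hzz0 : (0:ℤ) < 2 ^ Z.card * 2 ^ W.card := by positivity
  have hM0 : (0:ℤ) < 2 ^ m := by positivity
  have hA : (0:ℤ) < 2 ^ m - 2 ^ X.card := by linarith
  have hB : (0:ℤ) < 2 ^ m - 2 ^ Y.card := by linarith
  have hC6 : (0:ℤ) < 2 ^ m - 2 ^ X.card - 2 ^ Y.card := by linarith
  have p0 : (0:ℤ) < ((2:ℤ)^m - 2^X.card) * ((2:ℤ)^m - 2^Y.card) * (2^Z.card * 2^W.card) := mul_pos (mul_pos hA hB) hzz0
  have p1 : -(((2:ℤ)^m - 2^X.card) * 2^Y.card * (2^Z.card * 2^W.card)) < 0 :=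
    neg_lt_zero.mpr (mul_pos (mul_pos hA hy0) hzz0)
  have p2 : -(((2:ℤ)^m - 2^Y.card) * 2^X.card * (2^Z.card * 2^W.card)) < 0 :=
    neg_lt_zero.mpr (mul_pos (mul_pos hB hx0) hzz0)
  have p3' : (0:ℤ) < (2:ℤ)^X.card * 2^Y.card * (2^Z.card * 2^W.card) := mul_pos (mul_pos hx0 hy0) hzz0
  have hd0z : ((2:ℤ)^m - 2^X.card) * ((2:ℤ)^m - 2^Y.card) * (2^Z.card * 2^W.card) ≠ 0 := ne_of_gt p0
  have hd1z : -(((2:ℤ)^m - 2^X.card) * 2^Y.card * (2^Z.card * 2^W.card)) ≠ 0 := ne_of_lt p1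
  have hd2z : -(((2:ℤ)^m - 2^Y.card) * 2^X.card * (2^Z.card * 2^W.card)) ≠ 0 := ne_of_lt p2
  have hd3z : (2:ℤ)^X.card * 2^Y.card * (2^Z.card * 2^W.card) ≠ 0 := ne_of_gt p3'
  have hd01 : ((2:ℤ)^m - 2^X.card) * ((2:ℤ)^m - 2^Y.card) * (2^Z.card * 2^W.card) ≠ -(((2:ℤ)^m - 2^X.card) * 2^Y.card * (2^Z.card * 2^W.card)) := by linarith
  have hd02 : ((2:ℤ)^m - 2^X.card) * ((2:ℤ)^m - 2^Y.card) * (2^Z.card * 2^W.card) ≠ -(((2:ℤ)^m - 2^Y.card) * 2^X.card * (2^Z.card * 2^W.card)) := by linarith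
  have hd13 : -(((2:ℤ)^m - 2^X.card) * 2^Y.card * (2^Z.card * 2^W.card)) ≠ (2:ℤ)^X.card * 2^Y.card * (2^Z.card * 2^W.card) := by linarith
  have hd23 : -(((2:ℤ)^m - 2^Y.card) * 2^X.card * (2^Z.card * 2^W.card)) ≠ (2:ℤ)^X.card * 2^Y.card * (2^Z.card * 2^W.card) := by linarith
  have hd03 : ((2:ℤ)^m - 2^X.card) * ((2:ℤ)^m - 2^Y.card) * (2^Z.card * 2^W.card) ≠ (2:ℤ)^X.card * 2^Y.card * (2^Z.card * 2^W.card) := by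
    have key : ((2:ℤ)^m - 2^X.card) * ((2:ℤ)^m - 2^Y.card) * (2^Z.card * 2^W.card) - ((2:ℤ)^X.card * 2^Y.card * (2^Z.card * 2^W.card)) = 2^m * ((2:ℤ)^m - 2^X.card - 2^Y.card) * (2^Z.card * 2^W.card) := by ring
    have : (0:ℤ) < 2^m * ((2:ℤ)^m - 2^X.card - 2^Y.card) * (2^Z.card * 2^W.card) :=
      mul_pos (mul_pos hM0 hC6) hzz0
    intro h
    rw [h, sub_self] at key
    linarith
  have hd12 : -(((2:ℤ)^m - 2^X.card) * 2^Y.card * (2^Z.card * 2^W.card)) ≠ -(((2:ℤ)^m - 2^Y.card) * 2^X.card * (2^Z.card * 2^W.card)) := by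
    have key : (-(((2:ℤ)^m - 2^X.card) * 2^Y.card * (2^Z.card * 2^W.card))) - (-(((2:ℤ)^m - 2^Y.card) * 2^X.card * (2^Z.card * 2^W.card))) = 2^m * ((2:ℤ)^X.card - 2^Y.card) * (2^Z.card * 2^W.card) := by ring
    have hne : 2^m * ((2:ℤ)^X.card - 2^Y.card) * (2^Z.card * 2^W.card) ≠ 0 :=
      mul_ne_zero (mul_ne_zero (ne_of_gt hM0) (sub_ne_zero.mpr hxy)) (ne_of_gt hzz0)
    intro h
    rw [h, sub_self] at key
    exact hne key.symm
  have hclass0 : ∀ t : Msg m, sAv X (t.1 + t.2.2.2) * sAv Y t.2.2.1 * sZv Z t.2.1 * sZv W t.1 = ((2:ℤ)^m - 2^X.card) * ((2:ℤ)^m - 2^Y.card) * (2^Z.card * 2^W.card) ↔ (t.1 + t.2.2.2 = 0 ∧ t.2.2.1 = 0 ∧ (∀ i ∈ Z, t.2.1 i = 0) ∧ (∀ i ∈ W, t.1 i = 0)) := by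
    intro t
    rcases classify X Y Z W (t.1 + t.2.2.2) t.2.2.1 t.2.1 t.1 with ⟨hc, hval⟩|⟨hc, hval⟩|⟨hc, hval⟩|⟨hc, hval⟩|⟨hc, hval⟩
    · exact ⟨fun _ => hc, fun _ => hval⟩
    · exact ⟨fun h => absurd (hval.symm.trans h) hd01.symm, fun hC => absurd hC.2.1 hc.2.1.1⟩
    · exact ⟨fun h => absurd (hval.symm.trans h) hd02.symm, fun hC => absurd hC.1 hc.1.1⟩
    · exact ⟨fun h => absurd (hval.symm.trans h) hd03.symm, fun hC => absurd hC.1 hc.1.1⟩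
    · exact ⟨fun h => absurd (hval.symm.trans h).symm hd0z, fun hC => absurd ⟨fun i _ => by rw [hC.1]; rfl, fun i _ => by rw [hC.2.1]; rfl, hC.2.2.1, hC.2.2.2⟩ hc⟩
  have hclass1 : ∀ t : Msg m, sAv X (t.1 + t.2.2.2) * sAv Y t.2.2.1 * sZv Z t.2.1 * sZv W t.1 = -(((2:ℤ)^m - 2^X.card) * 2^Y.card * (2^Z.card * 2^W.card)) ↔ (t.1 + t.2.2.2 = 0 ∧ (¬t.2.2.1 = 0 ∧ ∀ i ∈ Y, t.2.2.1 i = 0) ∧ (∀ i ∈ Z, t.2.1 i = 0) ∧ (∀ i ∈ W, t.1 i = 0)) := by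
    intro t
    rcases classify X Y Z W (t.1 + t.2.2.2) t.2.2.1 t.2.1 t.1 with ⟨hc, hval⟩|⟨hc, hval⟩|⟨hc, hval⟩|⟨hc, hval⟩|⟨hc, hval⟩
    · exact ⟨fun h => absurd (hval.symm.trans h) hd01, fun hC => absurd hc.2.1 hC.2.1.1⟩
    · exact ⟨fun _ => hc, fun _ => hval⟩
    · exact ⟨fun h => absurd (hval.symm.trans h) hd12.symm, fun hC => absurd hC.1 hc.1.1⟩
    · exact ⟨fun h => absurd (hval.symm.trans h) hd13.symm, fun hC => absurd hC.1 hc.1.1⟩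
    · exact ⟨fun h => absurd (hval.symm.trans h).symm hd1z, fun hC => absurd ⟨fun i _ => by rw [hC.1]; rfl, hC.2.1.2, hC.2.2.1, hC.2.2.2⟩ hc⟩
  have hclass2 : ∀ t : Msg m, sAv X (t.1 + t.2.2.2) * sAv Y t.2.2.1 * sZv Z t.2.1 * sZv W t.1 = -(((2:ℤ)^m - 2^Y.card) * 2^X.card * (2^Z.card * 2^W.card)) ↔ ((¬t.1 + t.2.2.2 = 0 ∧ ∀ i ∈ X, (t.1 + t.2.2.2) i = 0) ∧ t.2.2.1 = 0 ∧ (∀ i ∈ Z, t.2.1 i = 0) ∧ (∀ i ∈ W, t.1 i = 0)) := by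
    intro t
    rcases classify X Y Z W (t.1 + t.2.2.2) t.2.2.1 t.2.1 t.1 with ⟨hc, hval⟩|⟨hc, hval⟩|⟨hc, hval⟩|⟨hc, hval⟩|⟨hc, hval⟩
    · exact ⟨fun h => absurd (hval.symm.trans h) hd02, fun hC => absurd hc.1 hC.1.1⟩
    · exact ⟨fun h => absurd (hval.symm.trans h) hd12, fun hC => absurd hc.1 hC.1.1⟩
    · exact ⟨fun _ => hc, fun _ => hval⟩
    · exact ⟨fun h => absurd (hval.symm.trans h) hd23.symm, fun hC => absurd hC.2.1 hc.2.1.1⟩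
    · exact ⟨fun h => absurd (hval.symm.trans h).symm hd2z, fun hC => absurd ⟨hC.1.2, fun i _ => by rw [hC.2.1]; rfl, hC.2.2.1, hC.2.2.2⟩ hc⟩
  have hclass3 : ∀ t : Msg m, sAv X (t.1 + t.2.2.2) * sAv Y t.2.2.1 * sZv Z t.2.1 * sZv W t.1 = (2:ℤ)^X.card * 2^Y.card * (2^Z.card * 2^W.card) ↔ ((¬t.1 + t.2.2.2 = 0 ∧ ∀ i ∈ X, (t.1 + t.2.2.2) i = 0) ∧ (¬t.2.2.1 = 0 ∧ ∀ i ∈ Y, t.2.2.1 i = 0) ∧ (∀ i ∈ Z, t.2.1 i = 0) ∧ (∀ i ∈ W, t.1 i = 0)) := by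
    intro t
    rcases classify X Y Z W (t.1 + t.2.2.2) t.2.2.1 t.2.1 t.1 with ⟨hc, hval⟩|⟨hc, hval⟩|⟨hc, hval⟩|⟨hc, hval⟩|⟨hc, hval⟩
    · exact ⟨fun h => absurd (hval.symm.trans h) hd03, fun hC => absurd hc.1 hC.1.1⟩
    · exact ⟨fun h => absurd (hval.symm.trans h) hd13, fun hC => absurd hc.1 hC.1.1⟩
    · exact ⟨fun h => absurd (hval.symm.trans h) hd23, fun hC => absurd hc.2.1 hC.2.1.1⟩
    · exact ⟨fun _ => hc, fun _ => hval⟩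
    · exact ⟨fun h => absurd (hval.symm.trans h).symm hd3z, fun hC => absurd ⟨hC.1.2, hC.2.1.2, hC.2.2.1, hC.2.2.2⟩ hc⟩
  have hclass4 : ∀ t : Msg m, sAv X (t.1 + t.2.2.2) * sAv Y t.2.2.1 * sZv Z t.2.1 * sZv W t.1 = 0 ↔ ¬((∀ i ∈ X, (t.1 + t.2.2.2) i = 0) ∧ (∀ i ∈ Y, t.2.2.1 i = 0) ∧ (∀ i ∈ Z, t.2.1 i = 0) ∧ (∀ i ∈ W, t.1 i = 0)) := by
    intro t
    rcases classify X Y Z W (t.1 + t.2.2.2) t.2.2.1 t.2.1 t.1 with ⟨hc, hval⟩|⟨hc, hval⟩|⟨hc, hval⟩|⟨hc, hval⟩|⟨hc, hval⟩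
    · exact ⟨fun h => absurd (hval.symm.trans h) hd0z, fun hC => absurd ⟨fun i _ => by rw [hc.1]; rfl, fun i _ => by rw [hc.2.1]; rfl, hc.2.2.1, hc.2.2.2⟩ hC⟩
    · exact ⟨fun h => absurd (hval.symm.trans h) hd1z, fun hC => absurd ⟨fun i _ => by rw [hc.1]; rfl, hc.2.1.2, hc.2.2.1, hc.2.2.2⟩ hC⟩
    · exact ⟨fun h => absurd (hval.symm.trans h) hd2z, fun hC => absurd ⟨hc.1.2, fun i _ => by rw [hc.2.1]; rfl, hc.2.2.1, hc.2.2.2⟩ hC⟩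
    · exact ⟨fun h => absurd (hval.symm.trans h) hd3z, fun hC => absurd ⟨hc.1.2, hc.2.1.2, hc.2.2.1, hc.2.2.2⟩ hC⟩
    · exact ⟨fun _ => hc, fun _ => hval⟩
  have heq0 : ∀ t : Msg m, (cw (deltac X) (deltac Y) (delta Z) (delta W) t = 0) ↔ sAv X (t.1 + t.2.2.2) * sAv Y t.2.2.1 * sZv Z t.2.1 * sZv W t.1 = ((2:ℤ)^m - 2^X.card) * ((2:ℤ)^m - 2^Y.card) * (2^Z.card * 2^W.card) := by
    intro t
    have h := nat_eq_iff_int (cw (deltac X) (deltac Y) (delta Z) (delta W) t) 0 (sAv X (t.1 + t.2.2.2) * sAv Y t.2.2.1 * sZv Z t.2.1 * sZv W t.1) (((2:ℤ)^m - 2^X.card) * ((2:ℤ)^m - 2^Y.card) * (2^Z.card * 2^W.card)) 0 (two_cw X Y Z W t) (by norm_num)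
    rw [sub_zero] at h
    constructor
    · intro hh
      exact h.mp (by omega)
    · intro hh
      have h2 := h.mpr hh
      omega
  have heq1 : ∀ t : Msg m, (2 * cw (deltac X) (deltac Y) (delta Z) (delta W) t = (2 ^ m - 2 ^ X.card) * 2 ^ (m + (Z.card + W.card))) ↔ sAv X (t.1 + t.2.2.2) * sAv Y t.2.2.1 * sZv Z t.2.1 * sZv W t.1 = -(((2:ℤ)^m - 2^X.card) * 2^Y.card * (2^Z.card * 2^W.card)) := by
    intro t
    have hT : (((2 ^ m - 2 ^ X.card) * 2 ^ (m + (Z.card + W.card)) : ℕ) : ℤ) = ((2:ℤ)^m - 2^X.card) * ((2:ℤ)^m * (2^Z.card * 2^W.card)) := by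
      rw [Nat.cast_mul, Nat.cast_sub hxle]
      push_cast
      rw [pow_add, pow_add]
    have h := nat_eq_iff_int (cw (deltac X) (deltac Y) (delta Z) (delta W) t) ((2 ^ m - 2 ^ X.card) * 2 ^ (m + (Z.card + W.card))) (sAv X (t.1 + t.2.2.2) * sAv Y t.2.2.1 * sZv Z t.2.1 * sZv W t.1) (((2:ℤ)^m - 2^X.card) * ((2:ℤ)^m - 2^Y.card) * (2^Z.card * 2^W.card)) (((2:ℤ)^m - 2^X.card) * ((2:ℤ)^m * (2^Z.card * 2^W.card))) (two_cw X Y Z W t) hT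
    rwa [show (((2:ℤ)^m - 2^X.card) * ((2:ℤ)^m - 2^Y.card) * (2^Z.card * 2^W.card)) - (((2:ℤ)^m - 2^X.card) * ((2:ℤ)^m * (2^Z.card * 2^W.card))) = -(((2:ℤ)^m - 2^X.card) * 2^Y.card * (2^Z.card * 2^W.card)) from by ring] at h
  have heq2 : ∀ t : Msg m, (2 * cw (deltac X) (deltac Y) (delta Z) (delta W) t = (2 ^ m - 2 ^ Y.card) * 2 ^ (m + (Z.card + W.card))) ↔ sAv X (t.1 + t.2.2.2) * sAv Y t.2.2.1 * sZv Z t.2.1 * sZv W t.1 = -(((2:ℤ)^m - 2^Y.card) * 2^X.card * (2^Z.card * 2^W.card)) := by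
    intro t
    have hT : (((2 ^ m - 2 ^ Y.card) * 2 ^ (m + (Z.card + W.card)) : ℕ) : ℤ) = ((2:ℤ)^m - 2^Y.card) * ((2:ℤ)^m * (2^Z.card * 2^W.card)) := by
      rw [Nat.cast_mul, Nat.cast_sub hyle]
      push_cast
      rw [pow_add, pow_add]
    have h := nat_eq_iff_int (cw (deltac X) (deltac Y) (delta Z) (delta W) t) ((2 ^ m - 2 ^ Y.card) * 2 ^ (m + (Z.card + W.card))) (sAv X (t.1 + t.2.2.2) * sAv Y t.2.2.1 * sZv Z t.2.1 * sZv W t.1) (((2:ℤ)^m - 2^X.card) * ((2:ℤ)^m - 2^Y.card) * (2^Z.card * 2^W.card)) (((2:ℤ)^m - 2^Y.card) * ((2:ℤ)^m * (2^Z.card * 2^W.card))) (two_cw X Y Z W t) hT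
    rwa [show (((2:ℤ)^m - 2^X.card) * ((2:ℤ)^m - 2^Y.card) * (2^Z.card * 2^W.card)) - (((2:ℤ)^m - 2^Y.card) * ((2:ℤ)^m * (2^Z.card * 2^W.card))) = -(((2:ℤ)^m - 2^Y.card) * 2^X.card * (2^Z.card * 2^W.card)) from by ring] at h
  have heq3 : ∀ t : Msg m, (2 * cw (deltac X) (deltac Y) (delta Z) (delta W) t = (2 ^ m - 2 ^ X.card - 2 ^ Y.card) * 2 ^ (m + (Z.card + W.card))) ↔ sAv X (t.1 + t.2.2.2) * sAv Y t.2.2.1 * sZv Z t.2.1 * sZv W t.1 = (2:ℤ)^X.card * 2^Y.card * (2^Z.card * 2^W.card) := by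
    intro t
    have hT : (((2 ^ m - 2 ^ X.card - 2 ^ Y.card) * 2 ^ (m + (Z.card + W.card)) : ℕ) : ℤ) = ((2:ℤ)^m - 2^X.card - 2^Y.card) * ((2:ℤ)^m * (2^Z.card * 2^W.card)) := by
      rw [Nat.cast_mul, Nat.cast_sub (by omega : (2:ℕ) ^ Y.card ≤ 2 ^ m - 2 ^ X.card), Nat.cast_sub hxle]
      push_cast
      rw [pow_add, pow_add]
    have h := nat_eq_iff_int (cw (deltac X) (deltac Y) (delta Z) (delta W) t) ((2 ^ m - 2 ^ X.card - 2 ^ Y.card) * 2 ^ (m + (Z.card + W.card))) (sAv X (t.1 + t.2.2.2) * sAv Y t.2.2.1 * sZv Z t.2.1 * sZv W t.1) (((2:ℤ)^m - 2^X.card) * ((2:ℤ)^m - 2^Y.card) * (2^Z.card * 2^W.card)) (((2:ℤ)^m - 2^X.card - 2^Y.card) * ((2:ℤ)^m * (2^Z.card * 2^W.card))) (two_cw X Y Z W t) hT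
    rwa [show (((2:ℤ)^m - 2^X.card) * ((2:ℤ)^m - 2^Y.card) * (2^Z.card * 2^W.card)) - (((2:ℤ)^m - 2^X.card - 2^Y.card) * ((2:ℤ)^m * (2^Z.card * 2^W.card))) = (2:ℤ)^X.card * 2^Y.card * (2^Z.card * 2^W.card) from by ring] at h
  have heq4 : ∀ t : Msg m, (2 * cw (deltac X) (deltac Y) (delta Z) (delta W) t = (2 ^ m - 2 ^ X.card) * (2 ^ m - 2 ^ Y.card) * 2 ^ (Z.card + W.card)) ↔ sAv X (t.1 + t.2.2.2) * sAv Y t.2.2.1 * sZv Z t.2.1 * sZv W t.1 = 0 := by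
    intro t
    have hT : (((2 ^ m - 2 ^ X.card) * (2 ^ m - 2 ^ Y.card) * 2 ^ (Z.card + W.card) : ℕ) : ℤ) = ((2:ℤ)^m - 2^X.card) * ((2:ℤ)^m - 2^Y.card) * (2^Z.card * 2^W.card) := by
      rw [Nat.cast_mul, Nat.cast_mul, Nat.cast_sub hxle, Nat.cast_sub hyle]
      push_cast
      rw [pow_add]
    have h := nat_eq_iff_int (cw (deltac X) (deltac Y) (delta Z) (delta W) t) ((2 ^ m - 2 ^ X.card) * (2 ^ m - 2 ^ Y.card) * 2 ^ (Z.card + W.card)) (sAv X (t.1 + t.2.2.2) * sAv Y t.2.2.1 * sZv Z t.2.1 * sZv W t.1) (((2:ℤ)^m - 2^X.card) * ((2:ℤ)^m - 2^Y.card) * (2^Z.card * 2^W.card)) (((2:ℤ)^m - 2^X.card) * ((2:ℤ)^m - 2^Y.card) * (2^Z.card * 2^W.card)) (two_cw X Y Z W t) hT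
    rwa [show (((2:ℤ)^m - 2^X.card) * ((2:ℤ)^m - 2^Y.card) * (2^Z.card * 2^W.card)) - (((2:ℤ)^m - 2^X.card) * ((2:ℤ)^m - 2^Y.card) * (2^Z.card * 2^W.card)) = 0 from by ring] at h
  -- filter set equalities
  have hset0 : (Finset.univ.filter fun t : Msg m => cw (deltac X) (deltac Y) (delta Z) (delta W) t = 0)
      = Finset.univ.filter fun t : Msg m => (t.1 + t.2.2.2 = 0 ∧ t.2.2.1 = 0 ∧ (∀ i ∈ Z, t.2.1 i = 0) ∧ (∀ i ∈ W, t.1 i = 0)) := by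
    ext t
    simp only [Finset.mem_filter, Finset.mem_univ, true_and]
    rw [heq0 t, hclass0 t]
  have hset1 : (Finset.univ.filter fun t : Msg m => 2 * cw (deltac X) (deltac Y) (delta Z) (delta W) t = (2 ^ m - 2 ^ X.card) * 2 ^ (m + (Z.card + W.card)))
      = Finset.univ.filter fun t : Msg m => (t.1 + t.2.2.2 = 0 ∧ (¬t.2.2.1 = 0 ∧ ∀ i ∈ Y, t.2.2.1 i = 0) ∧ (∀ i ∈ Z, t.2.1 i = 0) ∧ (∀ i ∈ W, t.1 i = 0)) := by
    ext t
    simp only [Finset.mem_filter, Finset.mem_univ, true_and]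
    rw [heq1 t, hclass1 t]
  have hset2 : (Finset.univ.filter fun t : Msg m => 2 * cw (deltac X) (deltac Y) (delta Z) (delta W) t = (2 ^ m - 2 ^ Y.card) * 2 ^ (m + (Z.card + W.card)))
      = Finset.univ.filter fun t : Msg m => ((¬t.1 + t.2.2.2 = 0 ∧ ∀ i ∈ X, (t.1 + t.2.2.2) i = 0) ∧ t.2.2.1 = 0 ∧ (∀ i ∈ Z, t.2.1 i = 0) ∧ (∀ i ∈ W, t.1 i = 0)) := by
    ext t
    simp only [Finset.mem_filter, Finset.mem_univ, true_and]
    rw [heq2 t, hclass2 t]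
  have hset3 : (Finset.univ.filter fun t : Msg m => 2 * cw (deltac X) (deltac Y) (delta Z) (delta W) t = (2 ^ m - 2 ^ X.card - 2 ^ Y.card) * 2 ^ (m + (Z.card + W.card)))
      = Finset.univ.filter fun t : Msg m => ((¬t.1 + t.2.2.2 = 0 ∧ ∀ i ∈ X, (t.1 + t.2.2.2) i = 0) ∧ (¬t.2.2.1 = 0 ∧ ∀ i ∈ Y, t.2.2.1 i = 0) ∧ (∀ i ∈ Z, t.2.1 i = 0) ∧ (∀ i ∈ W, t.1 i = 0)) := by
    ext t
    simp only [Finset.mem_filter, Finset.mem_univ, true_and]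
    rw [heq3 t, hclass3 t]
  have hset4 : (Finset.univ.filter fun t : Msg m => 2 * cw (deltac X) (deltac Y) (delta Z) (delta W) t = (2 ^ m - 2 ^ X.card) * (2 ^ m - 2 ^ Y.card) * 2 ^ (Z.card + W.card))
      = Finset.univ.filter fun t : Msg m => ¬((∀ i ∈ X, (t.1 + t.2.2.2) i = 0) ∧ (∀ i ∈ Y, t.2.2.1 i = 0) ∧ (∀ i ∈ Z, t.2.1 i = 0) ∧ (∀ i ∈ W, t.1 i = 0)) := by
    ext t
    simp only [Finset.mem_filter, Finset.mem_univ, true_and]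
    rw [heq4 t, hclass4 t]
  -- counts
  have hcount0 : (Finset.univ.filter fun t : Msg m => (t.1 + t.2.2.2 = 0 ∧ t.2.2.1 = 0 ∧ (∀ i ∈ Z, t.2.1 i = 0) ∧ (∀ i ∈ W, t.1 i = 0))).card
      = 2 ^ (2 * m - (Z.card + W.card)) := by
    have h := count_class (m := m) (fun v : Fin m → ZMod 2 => v = 0) (fun v : Fin m → ZMod 2 => v = 0) (fun v : Fin m → ZMod 2 => ∀ i ∈ Z, v i = 0) (fun v : Fin m → ZMod 2 => ∀ i ∈ W, v i = 0)
    rw [h, count_eq_zero, count_vanish, count_vanish, one_mul, one_mul, ← pow_add, he0]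
  have hcount1 : (Finset.univ.filter fun t : Msg m => (t.1 + t.2.2.2 = 0 ∧ (¬t.2.2.1 = 0 ∧ ∀ i ∈ Y, t.2.2.1 i = 0) ∧ (∀ i ∈ Z, t.2.1 i = 0) ∧ (∀ i ∈ W, t.1 i = 0))).card
      = (2 ^ (m - Y.card) - 1) * 2 ^ (2 * m - (Z.card + W.card)) := by
    have h := count_class (m := m) (fun v : Fin m → ZMod 2 => v = 0) (fun v : Fin m → ZMod 2 => ¬v = 0 ∧ ∀ i ∈ Y, v i = 0) (fun v : Fin m → ZMod 2 => ∀ i ∈ Z, v i = 0) (fun v : Fin m → ZMod 2 => ∀ i ∈ W, v i = 0)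
    rw [h, count_eq_zero, count_vanish_ne, count_vanish, count_vanish, one_mul, mul_assoc,
      ← pow_add, he0]
  have hcount2 : (Finset.univ.filter fun t : Msg m => ((¬t.1 + t.2.2.2 = 0 ∧ ∀ i ∈ X, (t.1 + t.2.2.2) i = 0) ∧ t.2.2.1 = 0 ∧ (∀ i ∈ Z, t.2.1 i = 0) ∧ (∀ i ∈ W, t.1 i = 0))).card
      = (2 ^ (m - X.card) - 1) * 2 ^ (2 * m - (Z.card + W.card)) := by
    have h := count_class (m := m) (fun v : Fin m → ZMod 2 => ¬v = 0 ∧ ∀ i ∈ X, v i = 0) (fun v : Fin m → ZMod 2 => v = 0) (fun v : Fin m → ZMod 2 => ∀ i ∈ Z, v i = 0) (fun v : Fin m → ZMod 2 => ∀ i ∈ W, v i = 0)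
    rw [h, count_eq_zero, count_vanish_ne, count_vanish, count_vanish, mul_one, mul_assoc,
      ← pow_add, he0]
  have hcount3 : (Finset.univ.filter fun t : Msg m => ((¬t.1 + t.2.2.2 = 0 ∧ ∀ i ∈ X, (t.1 + t.2.2.2) i = 0) ∧ (¬t.2.2.1 = 0 ∧ ∀ i ∈ Y, t.2.2.1 i = 0) ∧ (∀ i ∈ Z, t.2.1 i = 0) ∧ (∀ i ∈ W, t.1 i = 0))).card
      = (2 ^ (2 * m - X.card - Y.card) - 2 ^ (m - X.card) - 2 ^ (m - Y.card) + 1) *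
          2 ^ (2 * m - (Z.card + W.card)) := by
    have h := count_class (m := m) (fun v : Fin m → ZMod 2 => ¬v = 0 ∧ ∀ i ∈ X, v i = 0) (fun v : Fin m → ZMod 2 => ¬v = 0 ∧ ∀ i ∈ Y, v i = 0) (fun v : Fin m → ZMod 2 => ∀ i ∈ Z, v i = 0) (fun v : Fin m → ZMod 2 => ∀ i ∈ W, v i = 0)
    rw [h, count_vanish_ne, count_vanish_ne, count_vanish, count_vanish, mul_assoc,
      ← pow_add, he0]
    congr 1
    rw [sub_one_mul_sub_one h2X h2Y, ← pow_add, he3]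
  have hcountR : (Finset.univ.filter fun t : Msg m => ((∀ i ∈ X, (t.1 + t.2.2.2) i = 0) ∧ (∀ i ∈ Y, t.2.2.1 i = 0) ∧ (∀ i ∈ Z, t.2.1 i = 0) ∧ (∀ i ∈ W, t.1 i = 0))).card
      = 2 ^ ((m - X.card) + (m - Y.card) + (m - Z.card) + (m - W.card)) := by
    have h := count_class (m := m) (fun v : Fin m → ZMod 2 => ∀ i ∈ X, v i = 0) (fun v : Fin m → ZMod 2 => ∀ i ∈ Y, v i = 0) (fun v : Fin m → ZMod 2 => ∀ i ∈ Z, v i = 0) (fun v : Fin m → ZMod 2 => ∀ i ∈ W, v i = 0)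
    rw [h, count_vanish, count_vanish, count_vanish, count_vanish, ← pow_add, ← pow_add, ← pow_add]
  have hcount4 : (Finset.univ.filter fun t : Msg m => ¬((∀ i ∈ X, (t.1 + t.2.2.2) i = 0) ∧ (∀ i ∈ Y, t.2.2.1 i = 0) ∧ (∀ i ∈ Z, t.2.1 i = 0) ∧ (∀ i ∈ W, t.1 i = 0))).card
      = (2 ^ (2 * m + (Z.card + W.card)) - 2 ^ (2 * m - X.card - Y.card)) *
          2 ^ (2 * m - (Z.card + W.card)) := by
    rw [Finset.filter_not, Finset.card_sdiff_of_subset (Finset.filter_subset _ _), hcountR, card_univ_msg]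
    rw [Nat.sub_mul, ← pow_add, ← pow_add]
    have e1 : 2 * m + (Z.card + W.card) + (2 * m - (Z.card + W.card)) = 4 * m := by omega
    have e2 : 2 * m - X.card - Y.card + (2 * m - (Z.card + W.card))
        = (m - X.card) + (m - Y.card) + (m - Z.card) + (m - W.card) := by omega
    rw [e1, e2]
  exact ⟨by rw [hset0, hcount0], by rw [hset1, hcount1], by rw [hset2, hcount2],
    by rw [hset3, hcount3], by rw [hset4, hcount4]⟩
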